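/- arXiv:1902.07820 — 2 statements merged into one kernel-verified Lean document; each statement's English description precedes it below -/
import Mathlib

section
/- If γ ∈ [0,1) satisfies γ · ρ(A)² < 1, then the series ∑_{j=1}^∞ γ^j Tr(f^j(P̄₀)) converges (is finite). (Sufficiency direction of the summability criterion used in the proof of Theorem 1: the geometrically weighted sum of estimation error costs is bounded when (1−λ′)ρ²(A) < 1.) -/
open Matrix Filter
open scoped ENNReal NNReal

/-- The Riccati-type operator `f(X) = A X Aᵀ + Q`. -/
def fop {n : ℕ} (A Q : Matrix (Fin n) (Fin n) ℝ) (X : Matrix (Fin n) (Fin n) ℝ) :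
    Matrix (Fin n) (Fin n) ℝ :=
  A * X * Aᵀ + Q

/-- The spectral radius of a real square matrix: the maximum modulus of its
(complex) eigenvalues. -/
noncomputable def rho {n : ℕ} (A : Matrix (Fin n) (Fin n) ℝ) : ℝ :=
  sSup ((fun z : ℂ => ‖z‖) '' spectrum ℂ (A.map Complex.ofReal))

section Aux

attribute [local instance]
  Matrix.linftyOpNormedAddCommGroup Matrix.linftyOpNormedRing Matrix.linftyOpNormedAlgebra

private theorem entry_le_norm {d : ℕ} (M : Matrix (Fin d) (Fin d) ℂ) (i j : Fin d) :
    ‖M i j‖ ≤ ‖M‖ := by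
  rw [Matrix.linfty_opNorm_def]
  calc ‖M i j‖ ≤ ∑ k, ‖M i k‖ :=
      Finset.single_le_sum (fun k _ => norm_nonneg _) (Finset.mem_univ j)
  _ ≤ _ := by
      have h := Finset.le_sup (f := fun i => ∑ k, ‖M i k‖₊) (Finset.mem_univ i)
      have h2 := NNReal.coe_le_coe.mpr h
      simpa [NNReal.coe_sum] using h2

private theorem sr_le_rho {d : ℕ} (A : Matrix (Fin d) (Fin d) ℝ) :
    spectralRadius ℂ (A.map Complex.ofReal) ≤ ENNReal.ofReal (max (rho A) 0) := by
  rw [spectralRadius]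
  refine iSup₂_le fun k hk => ?_
  have hbdd : BddAbove ((fun z : ℂ => ‖z‖) '' spectrum ℂ (A.map Complex.ofReal)) := by
    haveI : CompleteSpace (Matrix (Fin d) (Fin d) ℂ) := FiniteDimensional.complete ℂ _
    exact ((spectrum.isCompact (A.map Complex.ofReal)).image continuous_norm).bddAbove
  have h1 : ‖k‖ ≤ rho A := le_csSup hbdd ⟨k, hk, rfl⟩
  have h2 : ‖k‖ ≤ max (rho A) 0 := le_max_of_le_left (by simpa using h1)
  calc (‖k‖₊ : ℝ≥0∞) = ENNReal.ofReal ‖k‖ := (ofReal_norm k).symm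
  _ ≤ _ := ENNReal.ofReal_le_ofReal h2

private theorem gelfand_bound {d : ℕ} (B : Matrix (Fin d) (Fin d) ℂ) {r : ℝ} (hr : 1 ≤ r)
    (h : spectralRadius ℂ B < ENNReal.ofReal r) :
    ∃ C : ℝ, 1 ≤ C ∧ ∀ j, ‖B ^ j‖ ≤ C * r ^ j := by
  haveI : CompleteSpace (Matrix (Fin d) (Fin d) ℂ) := FiniteDimensional.complete ℂ _
  have hrpos : (0:ℝ) < r := lt_of_lt_of_le one_pos hr
  have htend := spectrum.pow_nnnorm_pow_one_div_tendsto_nhds_spectralRadius B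
  have hev := htend.eventually_lt_const h
  obtain ⟨N, hN⟩ := eventually_atTop.mp hev
  have hpow : ∀ n, N ≤ n → 1 ≤ n → ‖B ^ n‖ ≤ r ^ n := by
    intro n hn hn1
    have hlt := (hN n hn).le
    have h3 : (‖B ^ n‖₊ : ℝ≥0∞) ≤ (ENNReal.ofReal r) ^ (n : ℝ) := by
      calc (‖B ^ n‖₊ : ℝ≥0∞) = ((‖B ^ n‖₊ : ℝ≥0∞) ^ (1 / (n:ℝ))) ^ (n:ℝ) := by
            rw [← ENNReal.rpow_mul]
            rw [one_div, inv_mul_cancel₀ (by exact_mod_cast Nat.one_le_iff_ne_zero.mp hn1),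
              ENNReal.rpow_one]
      _ ≤ _ := ENNReal.rpow_le_rpow hlt (Nat.cast_nonneg n)
    rw [ENNReal.rpow_natCast, ← ENNReal.ofReal_pow hrpos.le] at h3
    have := ENNReal.toReal_mono (by simp) h3
    simpa [ENNReal.toReal_ofReal (pow_nonneg hrpos.le n)] using this
  set C := 1 + ∑ n ∈ Finset.range (max N 1), ‖B ^ n‖ with hC
  have hC1 : (1:ℝ) ≤ C := by
    have : (0:ℝ) ≤ ∑ n ∈ Finset.range (max N 1), ‖B ^ n‖ :=
      Finset.sum_nonneg fun n _ => norm_nonneg _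
    linarith
  refine ⟨C, hC1, fun j => ?_⟩
  have hrj : (1:ℝ) ≤ r ^ j := one_le_pow₀ hr
  rcases lt_or_ge j (max N 1) with hj | hj
  · have h4 : ‖B ^ j‖ ≤ ∑ n ∈ Finset.range (max N 1), ‖B ^ n‖ :=
      Finset.single_le_sum (f := fun n => ‖B ^ n‖) (fun n _ => norm_nonneg _)
        (Finset.mem_range.mpr hj)
    calc ‖B ^ j‖ ≤ C := by linarith
    _ = C * 1 := (mul_one C).symm
    _ ≤ C * r ^ j := by nlinarith
  · have h5 := hpow j (le_trans (le_max_left _ _) hj) (le_trans (le_max_right _ _) hj)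
    calc ‖B ^ j‖ ≤ r ^ j := h5
    _ = 1 * r ^ j := (one_mul _).symm
    _ ≤ C * r ^ j := by nlinarith

end Aux

private theorem psd_diag_nonneg {d : ℕ} {X : Matrix (Fin d) (Fin d) ℝ} (hX : X.PosSemidef)
    (i : Fin d) : 0 ≤ X i i := by
  simpa [mulVec, dotProduct, Pi.single_apply] using hX.dotProduct_mulVec_nonneg (Pi.single i 1)

private theorem psd_trace_nonneg {d : ℕ} {X : Matrix (Fin d) (Fin d) ℝ} (hX : X.PosSemidef) :
    0 ≤ X.trace :=
  Finset.sum_nonneg fun i _ => psd_diag_nonneg hX i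

private theorem psd_entry_le_trace {d : ℕ} {X : Matrix (Fin d) (Fin d) ℝ} (hX : X.PosSemidef)
    (a b : Fin d) : |X a b| ≤ X.trace := by
  have hdiag : ∀ i, 0 ≤ X i i := psd_diag_nonneg hX
  have hsym : X b a = X a b := by
    have := hX.1
    rw [IsHermitian] at this
    conv_lhs => rw [← this]
    simp [conjTranspose_apply]
  have h1 := hX.dotProduct_mulVec_nonneg (Pi.single a 1 + Pi.single b 1)
  have h2 := hX.dotProduct_mulVec_nonneg (Pi.single a 1 - Pi.single b 1)
  simp [mulVec, dotProduct, Pi.single_apply, add_mul, mul_add, sub_mul, mul_sub,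
    Finset.sum_add_distrib, Finset.sum_sub_distrib] at h1 h2
  have hdle : ∀ i, X i i ≤ X.trace := fun i => by
    rw [Matrix.trace]
    exact Finset.single_le_sum (fun j _ => hdiag j) (Finset.mem_univ i)
  rcases eq_or_ne a b with rfl | hab
  · rw [abs_of_nonneg (hdiag a)]; exact hdle a
  · rw [abs_le]
    constructor
    · nlinarith [hdle a, hdle b, hdiag a, hdiag b]
    · nlinarith [hdle a, hdle b, hdiag a, hdiag b]

private theorem trace_conj_le {d : ℕ} (M : Matrix (Fin d) (Fin d) ℝ)
    {X : Matrix (Fin d) (Fin d) ℝ} (hX : X.PosSemidef) :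
    (M * X * Mᵀ).trace ≤ (∑ k, ∑ a, |M k a|) ^ 2 * X.trace := by
  have hent := psd_entry_le_trace hX
  have htr := psd_trace_nonneg hX
  have hexp : (M * X * Mᵀ).trace = ∑ k, ∑ b, ∑ a, M k a * X a b * M k b := by
    simp [Matrix.trace, Matrix.mul_apply, Matrix.diag, Finset.sum_mul]
  rw [hexp]
  set S := ∑ k, ∑ a : Fin d, |M k a| with hS
  have hSk : ∀ k, (∑ a : Fin d, |M k a|) ≤ S := fun k =>
    Finset.single_le_sum (f := fun k => ∑ a : Fin d, |M k a|)
      (fun j _ => Finset.sum_nonneg fun a _ => abs_nonneg _) (Finset.mem_univ k)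
  calc ∑ k, ∑ b, ∑ a, M k a * X a b * M k b
      ≤ ∑ k, ∑ b, ∑ a : Fin d, |M k a| * X.trace * |M k b| := by
        refine Finset.sum_le_sum fun k _ => Finset.sum_le_sum fun b _ =>
          Finset.sum_le_sum fun a _ => ?_
        calc M k a * X a b * M k b ≤ |M k a * X a b * M k b| := le_abs_self _
        _ = |M k a| * |X a b| * |M k b| := by rw [abs_mul, abs_mul]
        _ ≤ |M k a| * X.trace * |M k b| :=
            mul_le_mul_of_nonneg_right
              (mul_le_mul_of_nonneg_left (hent a b) (abs_nonneg _)) (abs_nonneg _)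
    _ = ∑ k, (∑ a : Fin d, |M k a|) * X.trace * (∑ b : Fin d, |M k b|) := by
        refine Finset.sum_congr rfl fun k _ => ?_
        simp only [← Finset.sum_mul, ← Finset.mul_sum]
    _ ≤ ∑ k, S * X.trace * (∑ b : Fin d, |M k b|) := by
        refine Finset.sum_le_sum fun k _ => ?_
        exact mul_le_mul_of_nonneg_right
          (mul_le_mul_of_nonneg_right (hSk k) htr)
          (Finset.sum_nonneg fun b _ => abs_nonneg _)
    _ = S * X.trace * S := by rw [← Finset.mul_sum]
    _ = S ^ 2 * X.trace := by ring

private theorem trace_conj_nonneg {d : ℕ} (M : Matrix (Fin d) (Fin d) ℝ)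
    {X : Matrix (Fin d) (Fin d) ℝ} (hX : X.PosSemidef) : 0 ≤ (M * X * Mᵀ).trace := by
  have hpsd : (M * X * Mᵀ).PosSemidef := by
    rw [← conjTranspose_eq_transpose_of_trivial]
    exact hX.mul_mul_conjTranspose_same M
  exact psd_trace_nonneg hpsd

private theorem fop_iterate {d : ℕ} (A Q P0 : Matrix (Fin d) (Fin d) ℝ) (j : ℕ) :
    (fop A Q)^[j] P0 =
      A ^ j * P0 * (A ^ j)ᵀ + ∑ i ∈ Finset.range j, A ^ i * Q * (A ^ i)ᵀ := by
  have key : ∀ (X : Matrix (Fin d) (Fin d) ℝ) (i : ℕ),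
      A * (A ^ i * X * (A ^ i)ᵀ) * Aᵀ = A ^ (i + 1) * X * (A ^ (i + 1))ᵀ := by
    intro X i
    rw [transpose_pow, transpose_pow, pow_succ', pow_succ]
    noncomm_ring
  induction j with
  | zero => simp
  | succ n ih =>
    rw [Function.iterate_succ_apply', ih, fop, mul_add, add_mul, Finset.mul_sum,
      Finset.sum_mul]
    simp only [key]
    rw [Finset.sum_range_succ']
    simp only [pow_zero, Matrix.one_mul, transpose_one, Matrix.mul_one]
    abel

private theorem map_pow_ofReal {d : ℕ} (A : Matrix (Fin d) (Fin d) ℝ) (j : ℕ) :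
    (A.map Complex.ofReal) ^ j = (A ^ j).map Complex.ofReal := by
  induction j with
  | zero => simp [Matrix.map_one Complex.ofReal Complex.ofReal_zero Complex.ofReal_one]
  | succ n ih =>
    rw [pow_succ, pow_succ, ih]
    ext i j
    simp [Matrix.mul_apply]

section Main

attribute [local instance]
  Matrix.linftyOpNormedAddCommGroup Matrix.linftyOpNormedRing Matrix.linftyOpNormedAlgebra

/-- Sufficiency direction of the summability criterion: if `γ ∈ [0,1)` and
`γ ρ(A)² < 1`, then `∑_{j=1}^∞ γ^j Tr(f^j(P̄₀))` converges. -/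
theorem summable_weighted_trace {d : ℕ} (A Q P0 : Matrix (Fin d) (Fin d) ℝ)
    (hQ : Q.PosSemidef) (hP0 : P0.PosSemidef)
    (γ : ℝ) (hγ : γ ∈ Set.Ico (0 : ℝ) 1) (hstab : γ * (rho A) ^ 2 < 1) :
    Summable (fun j : ℕ => γ ^ (j + 1) * ((fop A Q)^[j + 1] P0).trace) := by
  obtain ⟨hγ0, hγ1⟩ := hγ
  rcases eq_or_lt_of_le hγ0 with rfl | hγpos
  · have hz : (fun j : ℕ => (0:ℝ) ^ (j + 1) * ((fop A Q)^[j + 1] P0).trace)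
        = fun _ => 0 := by
      funext j; simp [pow_succ]
    rw [hz]; exact summable_zero
  -- choose a rate r with max (rho A) 0 < r, 1 ≤ r, γ * r ^ 2 < 1
  obtain ⟨r, hr1, hρr, hrq⟩ :
      ∃ r : ℝ, 1 ≤ r ∧ max (rho A) 0 < r ∧ γ * r ^ 2 < 1 := by
    have hγs : 0 < Real.sqrt γ := Real.sqrt_pos.mpr hγpos
    have hsq : Real.sqrt γ ^ 2 = γ := Real.sq_sqrt hγ0
    have hsqlt : Real.sqrt γ < 1 := by
      rw [show (1:ℝ) = Real.sqrt 1 by simp]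
      exact Real.sqrt_lt_sqrt hγ0 hγ1
    have ht1 : 1 < (Real.sqrt γ)⁻¹ := (one_lt_inv₀ hγs).mpr hsqlt
    have ht0 : 0 < (Real.sqrt γ)⁻¹ := lt_trans one_pos ht1
    have ht2 : γ * ((Real.sqrt γ)⁻¹) ^ 2 = 1 := by
      rw [inv_pow, hsq, mul_inv_cancel₀ hγpos.ne']
    have hρ1 : 0 ≤ max (rho A) 0 := le_max_right _ _
    have hstab1 : γ * (max (rho A) 0) ^ 2 < 1 := by
      rcases le_or_gt (rho A) 0 with h | h
      · rw [max_eq_right h]; simpa using hγ1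
      · rw [max_eq_left h.le]; exact hstab
    have hρ1t : max (rho A) 0 < (Real.sqrt γ)⁻¹ := by
      by_contra hcon
      push_neg at hcon
      have h4 : ((Real.sqrt γ)⁻¹) ^ 2 ≤ (max (rho A) 0) ^ 2 :=
        pow_le_pow_left₀ ht0.le hcon 2
      nlinarith
    have hmt : max (max (rho A) 0) 1 < (Real.sqrt γ)⁻¹ := max_lt hρ1t ht1
    have hm1 : (1:ℝ) ≤ max (max (rho A) 0) 1 := le_max_right _ _
    have hmρ : max (rho A) 0 ≤ max (max (rho A) 0) 1 := le_max_left _ _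
    refine ⟨(max (max (rho A) 0) 1 + (Real.sqrt γ)⁻¹) / 2, by linarith, by linarith, ?_⟩
    have hr0' : (0:ℝ) ≤ (max (max (rho A) 0) 1 + (Real.sqrt γ)⁻¹) / 2 := by linarith
    have hrt : (max (max (rho A) 0) 1 + (Real.sqrt γ)⁻¹) / 2 < (Real.sqrt γ)⁻¹ := by linarith
    have h5 : ((max (max (rho A) 0) 1 + (Real.sqrt γ)⁻¹) / 2) ^ 2 < ((Real.sqrt γ)⁻¹) ^ 2 :=
      pow_lt_pow_left₀ hrt hr0' (by norm_num)
    nlinarith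
  have hr0 : (0:ℝ) ≤ r := le_trans zero_le_one hr1
  -- Gelfand bound
  have hsr : spectralRadius ℂ (A.map Complex.ofReal) < ENNReal.ofReal r := by
    refine lt_of_le_of_lt (sr_le_rho A) ?_
    rw [ENNReal.ofReal_lt_ofReal_iff (by linarith)]
    exact hρr
  obtain ⟨C, hC1, hC⟩ := gelfand_bound (A.map Complex.ofReal) hr1 hsr
  have hC0 : (0:ℝ) ≤ C := le_trans zero_le_one hC1
  -- entrywise bound on powers of A
  have hent : ∀ (j : ℕ) (k a : Fin d), |(A ^ j) k a| ≤ C * r ^ j := by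
    intro j k a
    have h1 := (entry_le_norm ((A.map Complex.ofReal) ^ j) k a).trans (hC j)
    rw [map_pow_ofReal] at h1
    simpa [Matrix.map_apply, Complex.norm_real, Real.norm_eq_abs] using h1
  have hSnn : ∀ j : ℕ, 0 ≤ ∑ k, ∑ a : Fin d, |(A ^ j) k a| := fun j =>
    Finset.sum_nonneg fun k _ => Finset.sum_nonneg fun a _ => abs_nonneg _
  obtain ⟨K, hK0, hSb⟩ :
      ∃ K : ℝ, 0 ≤ K ∧ ∀ j : ℕ, (∑ k, ∑ a : Fin d, |(A ^ j) k a|) ≤ K * r ^ j := by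
    refine ⟨(d:ℝ) ^ 2 * C, by positivity, fun j => ?_⟩
    calc ∑ k, ∑ a : Fin d, |(A ^ j) k a| ≤ ∑ _k : Fin d, ∑ _a : Fin d, C * r ^ j :=
        Finset.sum_le_sum fun k _ => Finset.sum_le_sum fun a _ => hent j k a
    _ = (d:ℝ) ^ 2 * C * r ^ j := by
        simp only [Finset.sum_const, Finset.card_univ, Fintype.card_fin, nsmul_eq_mul]
        ring
  have htrP0 := psd_trace_nonneg hP0
  have htrQ := psd_trace_nonneg hQ
  -- trace bounds
  have htrb : ∀ j : ℕ, ((fop A Q)^[j] P0).trace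
      ≤ K ^ 2 * (P0.trace + Q.trace) * (((j:ℝ) + 1) * (r ^ 2) ^ j) := by
    intro j
    rw [fop_iterate A Q P0 j, trace_add, Matrix.trace_sum]
    have hb1 : (A ^ j * P0 * (A ^ j)ᵀ).trace ≤ K ^ 2 * (r ^ 2) ^ j * P0.trace := by
      refine le_trans (trace_conj_le _ hP0) ?_
      have h2 : (∑ k, ∑ a : Fin d, |(A ^ j) k a|) ^ 2 ≤ (K * r ^ j) ^ 2 :=
        pow_le_pow_left₀ (hSnn j) (hSb j) 2
      calc (∑ k, ∑ a : Fin d, |(A ^ j) k a|) ^ 2 * P0.trace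
          ≤ (K * r ^ j) ^ 2 * P0.trace := mul_le_mul_of_nonneg_right h2 htrP0
      _ = K ^ 2 * (r ^ 2) ^ j * P0.trace := by ring
    have hb2 : ∀ i, i < j → (A ^ i * Q * (A ^ i)ᵀ).trace ≤ K ^ 2 * (r ^ 2) ^ j * Q.trace := by
      intro i hij
      refine le_trans (trace_conj_le _ hQ) ?_
      have h2 : (∑ k, ∑ a : Fin d, |(A ^ i) k a|) ^ 2 ≤ (K * r ^ i) ^ 2 :=
        pow_le_pow_left₀ (hSnn i) (hSb i) 2
      have hri : r ^ i ≤ r ^ j := pow_le_pow_right₀ hr1 hij.le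
      have h0i : (0:ℝ) ≤ K * r ^ i := mul_nonneg hK0 (pow_nonneg hr0 i)
      have h3 : (K * r ^ i) ^ 2 ≤ (K * r ^ j) ^ 2 :=
        pow_le_pow_left₀ h0i (mul_le_mul_of_nonneg_left hri hK0) 2
      calc (∑ k, ∑ a : Fin d, |(A ^ i) k a|) ^ 2 * Q.trace
          ≤ (K * r ^ j) ^ 2 * Q.trace := mul_le_mul_of_nonneg_right (h2.trans h3) htrQ
      _ = K ^ 2 * (r ^ 2) ^ j * Q.trace := by ring
    have hsum : ∑ i ∈ Finset.range j, (A ^ i * Q * (A ^ i)ᵀ).trace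
        ≤ (j:ℝ) * (K ^ 2 * (r ^ 2) ^ j * Q.trace) := by
      calc ∑ i ∈ Finset.range j, (A ^ i * Q * (A ^ i)ᵀ).trace
          ≤ ∑ _i ∈ Finset.range j, K ^ 2 * (r ^ 2) ^ j * Q.trace :=
            Finset.sum_le_sum fun i hi => hb2 i (Finset.mem_range.mp hi)
      _ = (j:ℝ) * (K ^ 2 * (r ^ 2) ^ j * Q.trace) := by
            rw [Finset.sum_const, Finset.card_range, nsmul_eq_mul]
    have hK2 : (0:ℝ) ≤ K ^ 2 * (r ^ 2) ^ j := by positivity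
    have hjnn : (0:ℝ) ≤ (j:ℝ) := Nat.cast_nonneg j
    nlinarith [mul_nonneg hK2 htrQ, mul_nonneg hK2 htrP0,
      mul_nonneg (mul_nonneg hK2 htrP0) hjnn, mul_nonneg (mul_nonneg hK2 htrQ) hjnn]
  have htrnn : ∀ j : ℕ, 0 ≤ ((fop A Q)^[j] P0).trace := by
    intro j
    rw [fop_iterate A Q P0 j, trace_add, Matrix.trace_sum]
    have h1 := trace_conj_nonneg (A ^ j) hP0
    have h2 : (0:ℝ) ≤ ∑ i ∈ Finset.range j, (A ^ i * Q * (A ^ i)ᵀ).trace :=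
      Finset.sum_nonneg fun i _ => trace_conj_nonneg (A ^ i) hQ
    linarith
  -- the dominating summable series
  have hq0 : 0 ≤ γ * r ^ 2 := by positivity
  have hsum1 : Summable (fun j : ℕ => ((j:ℝ)) ^ 1 * (γ * r ^ 2) ^ j) :=
    summable_pow_mul_geometric_of_norm_lt_one 1
      (by rw [Real.norm_eq_abs, abs_of_nonneg hq0]; exact hrq)
  have hsum2 : Summable (fun j : ℕ => (γ * r ^ 2) ^ j) :=
    summable_geometric_of_lt_one hq0 hrq
  have hsumg : Summable (fun j : ℕ =>
      (K ^ 2 * (P0.trace + Q.trace) * (γ * r ^ 2)) * (((j:ℝ) + 2) * (γ * r ^ 2) ^ j)) := by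
    have h := (hsum1.add (hsum2.mul_left 2)).mul_left
      (K ^ 2 * (P0.trace + Q.trace) * (γ * r ^ 2))
    refine h.congr fun j => ?_
    ring
  refine Summable.of_nonneg_of_le (fun j => ?_) (fun j => ?_) hsumg
  · exact mul_nonneg (pow_nonneg hγ0 _) (htrnn _)
  · have hb := htrb (j + 1)
    push_cast at hb
    have hγp : (0:ℝ) ≤ γ ^ (j + 1) := pow_nonneg hγ0 _
    calc γ ^ (j + 1) * ((fop A Q)^[j + 1] P0).trace
        ≤ γ ^ (j + 1) *
            (K ^ 2 * (P0.trace + Q.trace) * (((j:ℝ) + 1 + 1) * (r ^ 2) ^ (j + 1))) :=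
          mul_le_mul_of_nonneg_left hb hγp
    _ = (K ^ 2 * (P0.trace + Q.trace) * (γ * r ^ 2)) * (((j:ℝ) + 2) * (γ * r ^ 2) ^ j) := by
          ring

end Main
end

section
/- Suppose P̄₀ ⪯ f(P̄₀) in the Loewner order, and let g : ℕ → [0,1] satisfy g(0) > g(q+1) for the given q ∈ ℕ. Then at any state (r,q) with r = q, condition (16) holds, i.e., Tr(f^{q+2}(P̄₀)) ≤ [(1−g(q+1))Tr(f^{q+2}(P̄₀)) − (1−g(0))Tr(f(P̄₀))]/(g(0)−g(q+1)); equivalently, the suboptimal policy of Proposition 1 always chooses a new transmission (action 0) at states with r = q. -/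
open Matrix

lemma fop_sub {n : ℕ} (A Q X Y : Matrix (Fin n) (Fin n) ℝ) :
    fop A Q X - fop A Q Y = A * (X - Y) * Aᵀ := by
  simp [fop, Matrix.mul_sub, Matrix.sub_mul]

lemma iter_mono {n : ℕ} (A Q P0 : Matrix (Fin n) (Fin n) ℝ)
    (hmono : (fop A Q P0 - P0).PosSemidef) (k : ℕ) :
    ((fop A Q)^[k + 1] P0 - (fop A Q)^[k] P0).PosSemidef := by
  induction k with
  | zero => simpa using hmono
  | succ k ih =>
    have h : (fop A Q)^[k + 2] P0 - (fop A Q)^[k + 1] P0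
        = A * ((fop A Q)^[k + 1] P0 - (fop A Q)^[k] P0) * Aᵀ := by
      rw [Function.iterate_succ_apply', Function.iterate_succ_apply' (fop A Q) k]
      exact fop_sub A Q _ _
    rw [h]
    simpa using ih.mul_mul_conjTranspose_same A

lemma psd_trace_nonneg_s13 {n : ℕ} {M : Matrix (Fin n) (Fin n) ℝ} (h : M.PosSemidef) :
    0 ≤ M.trace := by
  rw [Matrix.trace]
  refine Finset.sum_nonneg fun i _ => ?_
  have := h.dotProduct_mulVec_nonneg (Pi.single i 1)
  simpa [dotProduct, Matrix.mulVec, Pi.single_apply, Finset.sum_ite_eq,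
    Finset.sum_ite_eq'] using this

lemma trace_mono {n : ℕ} (A Q P0 : Matrix (Fin n) (Fin n) ℝ)
    (hmono : (fop A Q P0 - P0).PosSemidef) (k : ℕ) :
    (fop A Q P0).trace ≤ ((fop A Q)^[k + 1] P0).trace := by
  induction k with
  | zero => simp
  | succ k ih =>
    refine ih.trans ?_
    have := psd_trace_nonneg_s13 (iter_mono A Q P0 hmono (k + 1))
    rw [Matrix.trace_sub] at this
    linarith

/-- At any state `(r,q)` with `r = q`, condition (16) holds, i.e. the suboptimal policy of
Proposition 1 always chooses a new transmission: assuming `P̄₀ ⪯ f(P̄₀)` and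
`g(q+1) < g(0)`, we have
`Tr(f^{q+2}(P̄₀)) ≤ [(1−g(q+1))Tr(f^{q+2}(P̄₀)) − (1−g(0))Tr(f(P̄₀))]/(g(0)−g(q+1))`. -/
theorem condition16_on_diagonal {d : ℕ} (A Q P0 : Matrix (Fin d) (Fin d) ℝ)
    (hQ : Q.PosSemidef) (hP0 : P0.PosSemidef)
    (hmono : (fop A Q P0 - P0).PosSemidef)
    (g : ℕ → ℝ) (hg : ∀ r : ℕ, g r ∈ Set.Icc (0 : ℝ) 1)
    (q : ℕ) (hgq : g (q + 1) < g 0) :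
    ((fop A Q)^[q + 2] P0).trace ≤
      ((1 - g (q + 1)) * ((fop A Q)^[q + 2] P0).trace -
          (1 - g 0) * (fop A Q P0).trace) / (g 0 - g (q + 1)) := by
  have ht := trace_mono A Q P0 hmono (q + 1)
  have hg0 := hg 0
  simp only [Set.mem_Icc] at hg0
  rw [le_div_iff₀ (by linarith)]
  nlinarith [hg0.2]
end
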